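/- The normalizing constant of the generalized Gaussian distribution is correct: for any dimension p ≥ 1, shape parameter β > 0, mean μ ∈ ℝ^p, and positive definite p×p matrix Σ, the integral over ℝ^p of C_p(β)/|Σ|^{1/2} · exp(-(1/2)·((x-μ)ᵀ Σ⁻¹ (x-μ))^β) dx equals 1, where C_p(β) = Γ(p/2)·β / (π^{p/2} · Γ(p/(2β)) · 2^{p/(2β)}). -/

import Mathlib

open MeasureTheory Matrix Real

lemma ggd_aux_radial (p : ℕ) (hp : 1 ≤ p) (β : ℝ) (hβ : 0 < β) :
    ∫ r in Set.Ioi (0:ℝ), r ^ (p - 1) * Real.exp (-(1 / 2) * r ^ (2 * β))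
      = 2 ^ ((p : ℝ) / (2 * β)) * (1 / (2 * β)) * Real.Gamma (p / (2 * β)) := by
  have h2β : (0:ℝ) < 2 * β := by linarith
  have hcast : ((p - 1 : ℕ) : ℝ) = (p : ℝ) - 1 := by
    rw [Nat.cast_sub hp, Nat.cast_one]
  have hppos : (0:ℝ) < p := by exact_mod_cast hp
  have h1 : ∫ r in Set.Ioi (0:ℝ), r ^ (p - 1) * Real.exp (-(1 / 2) * r ^ (2 * β))
      = ∫ r in Set.Ioi (0:ℝ), r ^ ((p : ℝ) - 1) * Real.exp (-(1 / 2) * r ^ (2 * β)) := by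
    refine setIntegral_congr_fun measurableSet_Ioi (fun x hx => ?_)
    rw [← hcast, Real.rpow_natCast]
  rw [h1, integral_rpow_mul_exp_neg_mul_rpow h2β (by linarith) (by norm_num : (0:ℝ) < 1/2)]
  rw [sub_add_cancel]
  congr 1
  congr 1
  rw [one_div, Real.inv_rpow (by norm_num : (0:ℝ) ≤ 2), ← Real.rpow_neg (by norm_num : (0:ℝ) ≤ 2)]
  ring_nf

lemma ggd_aux_euclidean (p : ℕ) (hp : 1 ≤ p) (β : ℝ) (hβ : 0 < β) :
    ∫ y : Fin p → ℝ, Real.exp (-(1 / 2) * (y ⬝ᵥ y) ^ β)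
      = Real.pi ^ ((p : ℝ) / 2) * Real.Gamma (p / (2 * β)) * 2 ^ ((p : ℝ) / (2 * β))
        / (Real.Gamma (p / 2) * β) := by
  haveI : Nonempty (Fin p) := Fin.pos_iff_nonempty.mp hp
  have hppos : (0:ℝ) < p := by exact_mod_cast hp
  have h1 : (∫ y : Fin p → ℝ, Real.exp (-(1 / 2) * (y ⬝ᵥ y) ^ β))
      = ∫ z : EuclideanSpace ℝ (Fin p), Real.exp (-(1 / 2) * ‖z‖ ^ (2 * β)) := by
    rw [← (EuclideanSpace.volume_preserving_symm_measurableEquiv_toLp (Fin p)).integral_comp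
      (MeasurableEquiv.measurableEmbedding _) (fun y => Real.exp (-(1 / 2) * (y ⬝ᵥ y) ^ β))]
    refine integral_congr_ae (Filter.Eventually.of_forall fun z => ?_)
    have hz : ((MeasurableEquiv.toLp 2 (Fin p → ℝ)).symm z) ⬝ᵥ
        ((MeasurableEquiv.toLp 2 (Fin p → ℝ)).symm z) = ‖z‖ ^ (2:ℕ) := by
      rw [← real_inner_self_eq_norm_sq]
      simp [dotProduct, PiLp.inner_apply, RCLike.inner_apply]
      rw [EuclideanSpace.norm_eq, Real.sq_sqrt (by positivity)]
      simp [Real.norm_eq_abs, sq_abs, sq]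
    simp only [hz]
    rw [← Real.rpow_natCast ‖z‖ 2, ← Real.rpow_mul (norm_nonneg z)]
    norm_num
  rw [h1]
  rw [integral_fun_norm_addHaar (volume : Measure (EuclideanSpace ℝ (Fin p)))
    (fun r => Real.exp (-(1 / 2) * r ^ (2 * β)))]
  simp only [finrank_euclideanSpace_fin, smul_eq_mul, nsmul_eq_mul]
  have hball : volume.real (Metric.ball (0 : EuclideanSpace ℝ (Fin p)) 1)
      = Real.pi ^ ((p : ℝ) / 2) / Real.Gamma ((p : ℝ) / 2 + 1) := by
    rw [measureReal_def, EuclideanSpace.volume_ball]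
    simp only [Fintype.card_fin, ENNReal.ofReal_one, one_pow, one_mul]
    rw [ENNReal.toReal_ofReal (by positivity)]
    congr 1
    rw [Real.sqrt_eq_rpow, ← Real.rpow_natCast (Real.pi ^ ((1:ℝ)/2)) p,
      ← Real.rpow_mul Real.pi_pos.le]
    ring_nf
  rw [hball]
  have hrad := ggd_aux_radial p hp β hβ
  rw [hrad, Real.Gamma_add_one (by positivity : (p:ℝ)/2 ≠ 0)]
  have hΓ1 : Real.Gamma ((p : ℝ) / 2) ≠ 0 := (Real.Gamma_pos_of_pos (by positivity)).ne'
  field_simp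

/-- The normalizing constant of the generalized Gaussian distribution is correct. -/
theorem ggd_density_integrates_to_one
    (p : ℕ) (hp : 1 ≤ p) (β : ℝ) (hβ : 0 < β)
    (μ : Fin p → ℝ) (S : Matrix (Fin p) (Fin p) ℝ) (hS : S.PosDef) :
    ∫ x : Fin p → ℝ,
      (Real.Gamma (p / 2) * β /
        (Real.pi ^ ((p : ℝ) / 2) * Real.Gamma (p / (2 * β)) * 2 ^ ((p : ℝ) / (2 * β))))
        / Real.sqrt S.det *
      Real.exp (-(1 / 2) * ((x - μ) ⬝ᵥ (S⁻¹ *ᵥ (x - μ))) ^ β) = 1 := by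
  open scoped MatrixOrder in set T : Matrix (Fin p) (Fin p) ℝ := CFC.sqrt S with hT
  open scoped MatrixOrder in have hTT : T * T = S := CFC.sqrt_mul_sqrt_self S (Matrix.nonneg_iff_posSemidef.mpr hS.posSemidef)
  have hdetsq : T.det * T.det = S.det := by rw [← Matrix.det_mul, hTT]
  have hdetS : 0 < S.det := hS.det_pos
  have hdetT : T.det ≠ 0 := by
    intro h
    rw [h, mul_zero] at hdetsq
    exact hdetS.ne hdetsq
  open scoped MatrixOrder in have hTsym : Tᵀ = T := by simpa [Matrix.IsHermitian, Matrix.conjTranspose_eq_transpose_of_trivial] using (Matrix.nonneg_iff_posSemidef.mp (CFC.sqrt_nonneg S)).1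
  have hTunit : IsUnit T.det := hdetT.isUnit
  -- matrix identity
  have hmat : Tᵀ * (S⁻¹ * T) = 1 := by
    rw [hTsym, ← hTT, Matrix.mul_inv_rev, mul_assoc T⁻¹,
      Matrix.nonsing_inv_mul T hTunit, mul_one, Matrix.mul_nonsing_inv T hTunit]
  have hkey : ∀ y : Fin p → ℝ, (T *ᵥ y) ⬝ᵥ (S⁻¹ *ᵥ (T *ᵥ y)) = y ⬝ᵥ y := by
    intro y
    calc (T *ᵥ y) ⬝ᵥ (S⁻¹ *ᵥ (T *ᵥ y))
        = (T *ᵥ y) ⬝ᵥ ((S⁻¹ * T) *ᵥ y) := by rw [Matrix.mulVec_mulVec]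
      _ = (y ᵥ* Tᵀ) ⬝ᵥ ((S⁻¹ * T) *ᵥ y) := by rw [Matrix.vecMul_transpose]
      _ = y ⬝ᵥ (Tᵀ *ᵥ ((S⁻¹ * T) *ᵥ y)) := (Matrix.dotProduct_mulVec y Tᵀ _).symm
      _ = y ⬝ᵥ ((Tᵀ * (S⁻¹ * T)) *ᵥ y) := by rw [Matrix.mulVec_mulVec]
      _ = y ⬝ᵥ y := by rw [hmat, Matrix.one_mulVec]
  -- the density function
  set F : (Fin p → ℝ) → ℝ := fun v => Real.exp (-(1 / 2) * (v ⬝ᵥ (S⁻¹ *ᵥ v)) ^ β) with hF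
  have hFcont : Continuous F := by
    apply Real.continuous_exp.comp
    apply Continuous.mul continuous_const
    apply (Real.continuous_rpow_const hβ.le).comp
    simp only [dotProduct, Matrix.mulVec]
    exact continuous_finset_sum _ fun i _ => (continuous_apply i).mul
      (continuous_finset_sum _ fun j _ => (continuous_const.mul (continuous_apply j)))
  -- translation
  have htrans : (∫ x : Fin p → ℝ, F (x - μ)) = ∫ x : Fin p → ℝ, F x :=
    integral_sub_right_eq_self F μ
  -- change of variables
  have hmap : Measure.map (Matrix.toLin' T) volume
      = ENNReal.ofReal |T.det|⁻¹ • volume := by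
    rw [Real.map_matrix_volume_pi_eq_smul_volume_pi hdetT, abs_inv]
  have hsubst : (∫ x : Fin p → ℝ, F x) = |T.det| * ∫ y : Fin p → ℝ, F (T *ᵥ y) := by
    have h1 : (∫ y : Fin p → ℝ, F (T *ᵥ y)) = ∫ x, F x ∂(Measure.map (Matrix.toLin' T) volume) := by
      rw [integral_map (Measurable.aemeasurable (Matrix.toLin' T).continuous_of_finiteDimensional.measurable)
        hFcont.aestronglyMeasurable]
      simp [Matrix.toLin'_apply]
    rw [h1, hmap, integral_smul_measure, ENNReal.toReal_ofReal (by positivity), smul_eq_mul,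
      ← mul_assoc, mul_inv_cancel₀ (abs_ne_zero.mpr hdetT), one_mul]
  have heq : (∫ y : Fin p → ℝ, F (T *ᵥ y))
      = ∫ y : Fin p → ℝ, Real.exp (-(1 / 2) * (y ⬝ᵥ y) ^ β) := by
    refine integral_congr_ae (Filter.Eventually.of_forall fun y => ?_)
    simp only [hF, hkey y]
  have hsqrtdet : Real.sqrt S.det = |T.det| := by
    rw [← hdetsq, ← sq, Real.sqrt_sq_eq_abs]
  have hΓ1 : Real.Gamma ((p : ℝ) / 2) ≠ 0 := (Real.Gamma_pos_of_pos (by positivity)).ne'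
  have hΓ2 : Real.Gamma ((p : ℝ) / (2 * β)) ≠ 0 :=
    (Real.Gamma_pos_of_pos (by positivity)).ne'
  have hπ : (0:ℝ) < Real.pi ^ ((p : ℝ) / 2) := Real.rpow_pos_of_pos Real.pi_pos _
  have h2 : (0:ℝ) < (2:ℝ) ^ ((p : ℝ) / (2 * β)) := Real.rpow_pos_of_pos (by norm_num) _
  have habs : (0:ℝ) < |T.det| := abs_pos.mpr hdetT
  calc ∫ x : Fin p → ℝ,
      (Real.Gamma (p / 2) * β /
        (Real.pi ^ ((p : ℝ) / 2) * Real.Gamma (p / (2 * β)) * 2 ^ ((p : ℝ) / (2 * β))))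
        / Real.sqrt S.det *
      Real.exp (-(1 / 2) * ((x - μ) ⬝ᵥ (S⁻¹ *ᵥ (x - μ))) ^ β)
      = (Real.Gamma (p / 2) * β /
        (Real.pi ^ ((p : ℝ) / 2) * Real.Gamma (p / (2 * β)) * 2 ^ ((p : ℝ) / (2 * β))))
        / Real.sqrt S.det * ∫ x : Fin p → ℝ, F (x - μ) := by
        rw [integral_const_mul]
    _ = (Real.Gamma (p / 2) * β /
        (Real.pi ^ ((p : ℝ) / 2) * Real.Gamma (p / (2 * β)) * 2 ^ ((p : ℝ) / (2 * β))))
        / Real.sqrt S.det * (|T.det| *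
          (Real.pi ^ ((p : ℝ) / 2) * Real.Gamma (p / (2 * β)) * 2 ^ ((p : ℝ) / (2 * β))
            / (Real.Gamma (p / 2) * β))) := by
        rw [htrans, hsubst, heq, ggd_aux_euclidean p hp β hβ]
    _ = 1 := by
        rw [hsqrtdet]
        field_simp
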